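/- For every ε ∈ ℂ, every strictly upper triangular n×n matrix X over ℂ[z], and every b ∈ {0, 1, …, n−1}, one has sh_{b+1}(X)·ψ_b(ε) = ψ_b(ε)·sh_b(X), where sh_n is read as sh_0 = identity. Consequently, the map sending X to the tuple (sh_b(X))_{b∈ℤ/nℤ} is an injective Lie algebra homomorphism from the strictly upper triangular matrices over ℂ[z] into ⨁_{b∈ℤ/nℤ} gl_n(ℂ[z]) whose image consists of tuples satisfying the intertwining relations A_{b+1}·ψ_b(ε) = ψ_b(ε)·A_b for all b. -/

import Mathlib

private lemma sh_apply' (n : ℕ) (ε : ℂ) (b : Fin n)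
    (X : Matrix (Fin n) (Fin n) (Polynomial ℂ)) (i j : Fin n) :
    (fun i j => if i.val < b.val ∧ b.val ≤ j.val
      then (Polynomial.X + Polynomial.C ε) * X i j else X i j : Matrix (Fin n) (Fin n) _) i j =
    (if i.val < b.val ∧ b.val ≤ j.val then Polynomial.X + Polynomial.C ε else 1) * X i j := by
  by_cases h : i.val < b.val ∧ b.val ≤ j.val <;> simp [h]


/-- The map `sh_b(ε)` on `n×n` matrices over `ℂ[z]`: it multiplies the `(i,j)` entry by
`z+ε` whenever (in 1-based indices) `i ≤ b < j`, i.e. in 0-based indices `i < b ∧ b ≤ j`,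
and leaves the other entries unchanged.  For `b = 0` no entry satisfies the condition,
so `sh_0` is the identity; in particular `sh_{b+1}` for `b = n-1` (i.e. `sh_n` read as
`sh_0` via the `Fin n` wraparound) is the identity. -/
noncomputable def sh (n : ℕ) (ε : ℂ) (b : Fin n)
    (X : Matrix (Fin n) (Fin n) (Polynomial ℂ)) : Matrix (Fin n) (Fin n) (Polynomial ℂ) :=
  fun i j => if i.val < b.val ∧ b.val ≤ j.val
    then (Polynomial.X + Polynomial.C ε) * X i j else X i j

/-- The diagonal matrix `ψ_b(ε)` over `ℂ[z]` whose `(b+1,b+1)` entry (1-based), i.e.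
`(b,b)` entry (0-based), is `z+ε` and whose other diagonal entries are `1`. -/
noncomputable def psiP (n : ℕ) (ε : ℂ) (b : Fin n) : Matrix (Fin n) (Fin n) (Polynomial ℂ) :=
  Matrix.diagonal (fun i => if i = b then Polynomial.X + Polynomial.C ε else 1)

/-- A matrix is strictly upper triangular if all entries `(i,j)` with `i ≥ j` vanish. -/
def StrictUpper {n : ℕ} (X : Matrix (Fin n) (Fin n) (Polynomial ℂ)) : Prop :=
  ∀ i j : Fin n, j ≤ i → X i j = 0

/-- for every strictly upper triangular `X` over `ℂ[z]` and every `b` one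
has `sh_{b+1}(X)·ψ_b(ε) = ψ_b(ε)·sh_b(X)` (with `sh_n = sh_0 = id`, realized by the
`Fin n` wraparound).  Consequently the map `X ↦ (sh_b(X))_b` is an injective Lie algebra
homomorphism (ℂ-linear, bracket preserving) from the strictly upper triangular matrices
over `ℂ[z]` into `⨁_{b ∈ ℤ/nℤ} gl_n(ℂ[z])` whose image consists of tuples satisfying
the intertwining relations `A_{b+1}·ψ_b(ε) = ψ_b(ε)·A_b` for all `b`. -/
theorem statement5 (n : ℕ) [NeZero n] (hn : 2 ≤ n) (ε : ℂ) :
    (∀ X : Matrix (Fin n) (Fin n) (Polynomial ℂ), StrictUpper X → ∀ b : Fin n,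
      sh n ε (b + 1) X * psiP n ε b = psiP n ε b * sh n ε b X) ∧
    (∀ X Y : Matrix (Fin n) (Fin n) (Polynomial ℂ), StrictUpper X → StrictUpper Y →
      (∀ b : Fin n, sh n ε b X = sh n ε b Y) → X = Y) ∧
    (∀ X Y : Matrix (Fin n) (Fin n) (Polynomial ℂ), StrictUpper X → StrictUpper Y →
      ∀ b : Fin n, sh n ε b (X + Y) = sh n ε b X + sh n ε b Y) ∧
    (∀ (c : ℂ) (X : Matrix (Fin n) (Fin n) (Polynomial ℂ)), StrictUpper X →
      ∀ b : Fin n, sh n ε b (c • X) = c • sh n ε b X) ∧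
    (∀ X Y : Matrix (Fin n) (Fin n) (Polynomial ℂ), StrictUpper X → StrictUpper Y →
      ∀ b : Fin n,
        sh n ε b (X * Y - Y * X) = sh n ε b X * sh n ε b Y - sh n ε b Y * sh n ε b X) := by
  have sh_apply : ∀ (b : Fin n) (X : Matrix (Fin n) (Fin n) (Polynomial ℂ)) (i j : Fin n),
      sh n ε b X i j =
      (if i.val < b.val ∧ b.val ≤ j.val then Polynomial.X + Polynomial.C ε else 1) * X i j := by
    intro b X i j
    unfold sh
    exact sh_apply' n ε b X i j
  refine ⟨?_, ?_, ?_, ?_, ?_⟩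
  · -- intertwining relation
    intro X hX b
    have hb1 : ((b + 1 : Fin n)).val = (b.val + 1) % n := by
      have h1 : (1 : Fin n).val = 1 := by
        rw [Fin.val_one']
        exact Nat.mod_eq_of_lt (by omega)
      rw [Fin.val_add, h1]
    refine Matrix.ext fun i j => ?_
    simp only [psiP, Matrix.mul_diagonal, Matrix.diagonal_mul, sh_apply]
    rcases le_or_gt j i with h | h
    · rw [hX i j h]; ring
    · have hij : i.val < j.val := h
      have hi := i.isLt; have hj := j.isLt; have hbn := b.isLt
      simp only [Fin.ext_iff]
      rw [hb1]
      rcases Nat.lt_or_ge (b.val + 1) n with hb | hb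
      · rw [Nat.mod_eq_of_lt hb]
        split_ifs <;> first | ring1 | omega
      · have hbe : b.val + 1 = n := by omega
        rw [hbe, Nat.mod_self]
        split_ifs <;> first | ring1 | omega
  · -- injectivity
    intro X Y _ _ h
    have h0 := h 0
    have hz : ((0 : Fin n)).val = 0 := by simp
    refine Matrix.ext fun i j => ?_
    have := congrFun (congrFun h0 i) j
    rwa [sh_apply, sh_apply, hz, if_neg (by omega : ¬((i:ℕ) < 0 ∧ 0 ≤ (j:ℕ))), one_mul, one_mul] at this
  · -- additivity
    intro X Y _ _ b
    refine Matrix.ext fun i j => ?_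
    simp only [sh_apply, Matrix.add_apply]
    ring
  · -- scalar multiplication
    intro c X _ b
    refine Matrix.ext fun i j => ?_
    simp only [sh_apply, Matrix.smul_apply]
    rw [mul_smul_comm]
  · -- bracket
    intro X Y hX hY b
    have key : ∀ X Y : Matrix (Fin n) (Fin n) (Polynomial ℂ), StrictUpper X → StrictUpper Y →
        sh n ε b (X * Y) = sh n ε b X * sh n ε b Y := by
      intro X Y hX hY
      refine Matrix.ext fun i j => ?_
      rw [sh_apply, Matrix.mul_apply, Matrix.mul_apply, Finset.mul_sum]
      refine Finset.sum_congr rfl fun k _ => ?_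
      rw [sh_apply, sh_apply]
      rcases le_or_gt k i with h | h
      · rw [hX i k h]; ring
      rcases le_or_gt j k with h2 | h2
      · rw [hY k j h2]; ring
      have hik : i.val < k.val := h
      have hkj : k.val < j.val := h2
      split_ifs <;> first | ring1 | omega
    have hsub : sh n ε b (X * Y - Y * X) = sh n ε b (X * Y) - sh n ε b (Y * X) := by
      refine Matrix.ext fun i j => ?_
      simp only [sh_apply, Matrix.sub_apply]
      ring
    rw [hsub, key X Y hX hY, key Y X hY hX]
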